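/- Let L be a finite lattice with elements listed as x_1, …, x_n, let R be a commutative ring, and let f : L → R. Let ζ(x,y) = 1 if x ≤ y and ζ(x,y) = 0 otherwise, let Z = (ζ(x_i, x_j))_{1≤i,j≤n} over R, let μ be the Möbius function of L, and set g(x) = Σ_{y ≥ x} μ(x,y) f(y) ∈ R. Then: (a) the Gram matrix G = (f(x_i ∨ x_j))_{1≤i,j≤n} satisfies G = Z · diag(g(x_1), …, g(x_n)) · Z^T, and det Z = 1; (b) if the listing satisfies i ≤ j whenever x_i ≤ x_j (resp. whenever x_j ≤ x_i), then Z is upper (resp. lower) unitriangular. -/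

import Mathlib

open scoped Classical

-- Right-sided Möbius inversion derived from the given left-sided one.
lemma aux_zeta_mu {L : Type*} [PartialOrder L] [Fintype L] (mu : L → L → ℤ)
    (hmu0 : ∀ x y : L, ¬ x ≤ y → mu x y = 0)
    (hmu1 : ∀ x y : L, (∑ z : L, if x ≤ z ∧ z ≤ y then mu x z else 0)
      = if x = y then 1 else 0) (a y : L) :
    (∑ z : L, if a ≤ z ∧ z ≤ y then mu z y else 0) = if a = y then 1 else 0 := by
  classical
  set M : Matrix L L ℤ := fun x z => mu x z with hM
  set Zm : Matrix L L ℤ := fun x z => if x ≤ z then 1 else 0 with hZ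
  have h1 : M * Zm = 1 := by
    ext x w
    rw [Matrix.mul_apply]
    have : ∀ z : L, M x z * Zm z w = if x ≤ z ∧ z ≤ w then mu x z else 0 := by
      intro z
      simp only [hM, hZ]
      by_cases h1 : x ≤ z <;> by_cases h2 : z ≤ w <;>
        simp [h1, h2, hmu0 x z]
    simp only [this, hmu1 x w, Matrix.one_apply]
  have h2 : Zm * M = 1 := mul_eq_one_comm.mp h1
  have := congrFun (congrFun h2 a) y
  rw [Matrix.mul_apply] at this
  have hterm : ∀ z : L, Zm a z * M z y = if a ≤ z ∧ z ≤ y then mu z y else 0 := by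
    intro z
    simp only [hM, hZ]
    by_cases h1 : a ≤ z <;> by_cases h2 : z ≤ y <;>
      simp [h1, h2, hmu0 z y]
  rw [Finset.sum_congr rfl fun z _ => hterm z] at this
  rw [this, Matrix.one_apply]

-- The determinant of the zeta matrix of a finite poset is 1.
lemma aux_det {L : Type*} [PartialOrder L] [Fintype L] {N : ℕ} (e : Fin N ≃ L)
    {R : Type*} [CommRing R] :
    (Matrix.of fun i j => if e i ≤ e j then (1:R) else 0).det = 1 := by
  classical
  haveI : Fintype (LinearExtension L) := ‹Fintype L›
  let q : L ≃ LinearExtension L :=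
    ⟨toLinearExtension, fun x => x, fun _ => rfl, fun _ => rfl⟩
  have hq : Monotone (q : L → LinearExtension L) := toLinearExtension.monotone
  have hcard : Fintype.card (LinearExtension L) = N := by
    rw [← Fintype.card_congr q]
    rw [← Fintype.card_fin N]
    exact Fintype.card_congr e.symm
  let φ := monoEquivOfFin (LinearExtension L) hcard
  let w : Fin N ≃ Fin N := (φ.toEquiv.trans q.symm).trans e.symm
  have hsub : (Matrix.of fun i j => if e i ≤ e j then (1:R) else 0).det
      = ((Matrix.of fun i j => if e i ≤ e j then (1:R) else 0).submatrix w w).det :=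
    (Matrix.det_submatrix_equiv_self w _).symm
  rw [hsub]
  have hw : ∀ k, e (w k) = q.symm (φ k) := fun k => e.apply_symm_apply _
  have hBT : ((Matrix.of fun i j => if e i ≤ e j then (1:R) else 0).submatrix w w).BlockTriangular id := by
    intro i j hij
    simp only [Matrix.submatrix_apply, Matrix.of_apply]
    rw [if_neg]
    intro hle
    have h1 : q (e (w i)) ≤ q (e (w j)) := hq hle
    rw [hw, hw, q.apply_symm_apply, q.apply_symm_apply] at h1
    have : (i : Fin N) ≤ j := φ.le_iff_le.mp h1
    exact absurd hij (not_lt.mpr this)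
  rw [Matrix.det_of_upperTriangular hBT]
  apply Finset.prod_eq_one
  intro i _
  simp [Matrix.submatrix_apply]

-- Möbius inversion over the ring `R`: summing `g` over `z ≥ a` recovers `f a`.
lemma aux_inv {L : Type*} [PartialOrder L] [Fintype L]
    {R : Type*} [CommRing R] (f : L → R) (mu : L → L → ℤ)
    (hmu0 : ∀ x y : L, ¬ x ≤ y → mu x y = 0)
    (hmu1 : ∀ x y : L, (∑ z : L, if x ≤ z ∧ z ≤ y then mu x z else 0)
      = if x = y then 1 else 0) (a : L) :
    (∑ z : L, if a ≤ z then (∑ y : L, if z ≤ y then (mu z y : ℤ) • f y else 0) else 0)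
      = f a := by
  classical
  calc (∑ z : L, if a ≤ z then (∑ y : L, if z ≤ y then (mu z y : ℤ) • f y else 0) else 0)
      = ∑ z : L, ∑ y : L, if a ≤ z ∧ z ≤ y then (mu z y : R) * f y else 0 := by
        apply Finset.sum_congr rfl
        intro z _
        by_cases h : a ≤ z
        · rw [if_pos h]
          apply Finset.sum_congr rfl
          intro y _
          by_cases h2 : z ≤ y <;> simp [h, h2, zsmul_eq_mul]
        · rw [if_neg h]
          refine (Finset.sum_eq_zero ?_).symm
          intro y _
          simp [h]
    _ = ∑ y : L, ∑ z : L, if a ≤ z ∧ z ≤ y then (mu z y : R) * f y else 0 :=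
        Finset.sum_comm
    _ = ∑ y : L, ((∑ z : L, if a ≤ z ∧ z ≤ y then mu z y else 0 : ℤ) : R) * f y := by
        apply Finset.sum_congr rfl
        intro y _
        push_cast
        rw [Finset.sum_mul]
        apply Finset.sum_congr rfl
        intro z _
        by_cases h : a ≤ z ∧ z ≤ y <;> simp [h]
    _ = ∑ y : L, (if a = y then (1:R) else 0) * f y := by
        apply Finset.sum_congr rfl
        intro y _
        rw [aux_zeta_mu mu hmu0 hmu1 a y]
        by_cases h : a = y <;> simp [h]
    _ = f a := by simp

/-- Let `L` be a finite lattice listed as `e 0, …, e (N-1)`, `R` a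
commutative ring, `f : L → R`, `mu` the (integer-valued) Möbius function of `L`
(characterized by the two hypotheses `hmu0`, `hmu1`), and `g x = ∑_{y ≥ x} mu x y • f y`.
Then (a) the Gram matrix `G = (f (x_i ⊔ x_j))` equals `Z * diag(g ∘ e) * Zᵀ` and
`det Z = 1`; (b) if the listing is such that `i ≤ j` whenever `e i ≤ e j`
(resp. whenever `e j ≤ e i`), then `Z` is upper (resp. lower) unitriangular. -/
theorem lattice_gram_factorization
    {L : Type*} [Lattice L] [Fintype L] {N : ℕ} (e : Fin N ≃ L)
    {R : Type*} [CommRing R] (f : L → R)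
    (mu : L → L → ℤ)
    (hmu0 : ∀ x y : L, ¬ x ≤ y → mu x y = 0)
    (hmu1 : ∀ x y : L, (∑ z : L, if x ≤ z ∧ z ≤ y then mu x z else 0)
      = if x = y then 1 else 0) :
    let g : L → R := fun x => ∑ y : L, if x ≤ y then (mu x y : ℤ) • f y else 0
    let Z : Matrix (Fin N) (Fin N) R := fun i j => if e i ≤ e j then 1 else 0
    let G : Matrix (Fin N) (Fin N) R := fun i j => f (e i ⊔ e j)
    (G = Z * Matrix.diagonal (fun i => g (e i)) * Z.transpose ∧ Z.det = 1) ∧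
    ((∀ i j : Fin N, e i ≤ e j → i ≤ j) →
      (∀ i, Z i i = 1) ∧ (∀ i j : Fin N, j < i → Z i j = 0)) ∧
    ((∀ i j : Fin N, e i ≤ e j → j ≤ i) →
      (∀ i, Z i i = 1) ∧ (∀ i j : Fin N, i < j → Z i j = 0)) := by
  classical
  intro g Z G
  refine ⟨⟨?_, ?_⟩, ?_, ?_⟩
  · -- G = Z * D * Zᵀ
    ext i j
    have hZD : (Z * Matrix.diagonal fun i => g (e i)) = fun i k => Z i k * g (e k) := by
      ext i k
      rw [Matrix.mul_diagonal]
    rw [hZD]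
    erw [Matrix.mul_apply]
    have hterm : ∀ k : Fin N,
        Z i k * g (e k) * Z.transpose k j
          = if e i ⊔ e j ≤ e k then g (e k) else 0 := by
      intro k
      rw [Matrix.transpose_apply]
      simp only [Z, Matrix.transpose_apply]
      by_cases h1 : e i ≤ e k <;> by_cases h2 : e j ≤ e k <;>
        simp [h1, h2, sup_le_iff]
    rw [Finset.sum_congr rfl fun k _ => hterm k]
    have := aux_inv f mu hmu0 hmu1 (e i ⊔ e j)
    simp only [G, g]
    rw [← this]
    exact (Fintype.sum_equiv e _ _ (fun k => rfl)).symm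
  · -- det Z = 1
    exact aux_det e
  · intro h
    refine ⟨fun i => by simp [Z], fun i j hij => ?_⟩
    simp only [Z]
    rw [if_neg]
    intro hle
    exact absurd hij (not_lt.mpr (h i j hle))
  · intro h
    refine ⟨fun i => by simp [Z], fun i j hij => ?_⟩
    simp only [Z]
    rw [if_neg]
    intro hle
    exact absurd hij (not_lt.mpr (h i j hle))
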